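/- Let P be a finite set of records with pairwise distinct arrival times and pairwise distinct real scores, let k ≥ 1, τ ≥ 0, and fix b with ρ = [b − τ, b]. Let t ∈ ρ, let U = Top_k([t − τ, t]) be the top-k records of the window [t − τ, t], let Z = U ∩ P(ρ), assume Z is nonempty, and let p be the record of Z with the largest arrival time. If p is not among Top_k([p.t − τ, p.t]), then Top_k([p.t − τ, p.t]) ∩ P(ρ) ⊆ Z \ {p}; in particular the new intersection with ρ is a strict subset of Z. -/

import Mathlib

/-- The records of `P` whose arrival time lies in the window `[a, b]`. -/
noncomputable def window {α : Type*} (P : Finset α) (t : α → ℝ) (a b : ℝ) : Finset α :=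
  P.filter (fun q => a ≤ t q ∧ t q ≤ b)

/-- The top-`k` records of the window `[a, b]`: records of the window beaten (in
score) by fewer than `k` records of the window. -/
noncomputable def topk {α : Type*} (k : ℕ) (P : Finset α) (t f : α → ℝ) (a b : ℝ) : Finset α :=
  (window P t a b).filter (fun r =>
    ((window P t a b).filter (fun q => f r < f q)).card < k)

/-- Fix `ρ = [b - τ, b]`, a time `t₀ ∈ ρ`, let `Z` be the part of the top-`k` of
the window `[t₀ - τ, t₀]` lying in `ρ`, and let `p` be the record of `Z` with the
largest arrival time.  If `p` is not among the top-`k` of `[t p - τ, t p]`, then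
the part of that top-`k` set lying in `ρ` is contained in `Z \ {p}`; in particular
it is a strict subset of `Z`. -/
theorem z_list_shrinks {α : Type*} [DecidableEq α] (P : Finset α) (t f : α → ℝ)
    (ht : Set.InjOn t P) (hf : Set.InjOn f P)
    (k : ℕ) (hk : 1 ≤ k) (τ : ℝ) (hτ : 0 ≤ τ)
    (b t₀ : ℝ) (ht₀ : b - τ ≤ t₀) (ht₀' : t₀ ≤ b)
    (p : α)
    (hpZ : p ∈ (topk k P t f (t₀ - τ) t₀).filter (fun q => b - τ ≤ t q ∧ t q ≤ b))
    (hmax : ∀ q ∈ (topk k P t f (t₀ - τ) t₀).filter (fun q => b - τ ≤ t q ∧ t q ≤ b),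
      t q ≤ t p)
    (hfc : p ∉ topk k P t f (t p - τ) (t p)) :
    ((topk k P t f (t p - τ) (t p)).filter (fun q => b - τ ≤ t q ∧ t q ≤ b))
        ⊆ ((topk k P t f (t₀ - τ) t₀).filter (fun q => b - τ ≤ t q ∧ t q ≤ b)).erase p
    ∧
    ((topk k P t f (t p - τ) (t p)).filter (fun q => b - τ ≤ t q ∧ t q ≤ b))
        ⊂ ((topk k P t f (t₀ - τ) t₀).filter (fun q => b - τ ≤ t q ∧ t q ≤ b)) := by
  classical
  have hpZ' := hpZ
  rw [Finset.mem_filter, topk, Finset.mem_filter, window, Finset.mem_filter] at hpZ'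
  obtain ⟨⟨⟨hpP, hpt1, hpt2⟩, hptop⟩, hpρ1, hpρ2⟩ := hpZ'
  -- p belongs to the new window
  have hpnew : p ∈ window P t (t p - τ) (t p) := by
    simp only [window, Finset.mem_filter]
    exact ⟨hpP, by linarith, le_refl _⟩
  -- p is beaten by at least k records in the new window
  have hpbeat : k ≤ ((window P t (t p - τ) (t p)).filter (fun q => f p < f q)).card := by
    by_contra h
    push_neg at h
    exact hfc (by rw [topk, Finset.mem_filter]; exact ⟨hpnew, h⟩)
  have hsub : ((topk k P t f (t p - τ) (t p)).filter (fun q => b - τ ≤ t q ∧ t q ≤ b))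
      ⊆ ((topk k P t f (t₀ - τ) t₀).filter (fun q => b - τ ≤ t q ∧ t q ≤ b)).erase p := by
    intro q hq
    simp only [Finset.mem_filter] at hq
    obtain ⟨hqtop, hqρ1, hqρ2⟩ := hq
    have hqtop' := hqtop
    rw [topk, Finset.mem_filter, window, Finset.mem_filter] at hqtop'
    obtain ⟨⟨hqP, hqt1, hqt2⟩, hqcard⟩ := hqtop'
    have hqp : q ≠ p := by rintro rfl; exact hfc hqtop
    have hfpq : f p < f q := by
      rcases lt_trichotomy (f p) (f q) with h | h | h
      · exact h
      · exact absurd (hf hqP hpP h.symm) hqp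
      · exfalso
        have hmono : (window P t (t p - τ) (t p)).filter (fun r => f p < f r)
            ⊆ (window P t (t p - τ) (t p)).filter (fun r => f q < f r) := by
          intro r hr
          simp only [Finset.mem_filter] at hr ⊢
          exact ⟨hr.1, h.trans hr.2⟩
        have h2 := (hpbeat.trans (Finset.card_le_card hmono))
        simp only [window] at h2
        omega
    refine Finset.mem_erase.mpr ⟨hqp, Finset.mem_filter.mpr ⟨?_, hqρ1, hqρ2⟩⟩
    rw [topk, Finset.mem_filter, window, Finset.mem_filter]
    refine ⟨⟨hqP, by linarith, by linarith⟩, ?_⟩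
    have hmono : (P.filter (fun r => t₀ - τ ≤ t r ∧ t r ≤ t₀)).filter (fun r => f q < f r)
        ⊆ (P.filter (fun r => t₀ - τ ≤ t r ∧ t r ≤ t₀)).filter (fun r => f p < f r) := by
      intro r hr
      simp only [Finset.mem_filter] at hr ⊢
      exact ⟨hr.1, hfpq.trans hr.2⟩
    have h3 := Finset.card_le_card hmono
    omega
  refine ⟨hsub, hsub.trans_ssubset (Finset.erase_ssubset hpZ)⟩
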